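/- Let L/K be a quadratic extension of fields inside K̄ with nontrivial Galois character ψ, q ∈ K×, and τ : K̄×/qℤ → E(K̄) a bijective homomorphism satisfying τ(σ(u)) = ψ(σ)·σ(τ(u)) for all σ ∈ Gal(K̄/K). Then for u ∈ L×/qℤ: τ(u) ∈ E(K) (i.e. is fixed by all of Gal(K̄/K)) if and only if 𝒩(u) = 1, where 𝒩 : L×/qℤ → K×/qℤ is induced by the norm. Hence τ restricts to an isomorphism ker(𝒩) ≅ E(K). -/

import Mathlib

/-- key fact in the proof of Lemma 5.6: Let `L/K` be a quadratic
extension inside `K̄` with quadratic character `ψ` (kernel `Gal(K̄/L)`), `q ∈ K×`, and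
`τ : K̄×/q^ℤ ≅ E(K̄)` a Tate-type parametrization with `τ(σu) = (σ·τ(u))^{ψ(σ)}`.
Then for `u ∈ L×`: `τ(u)` is fixed by all of `Gal(K̄/K)` (i.e. `τ(u) ∈ E(K)`) if and
only if `𝒩(u) = 1`, i.e. `N_{L/K}(u)` lies in `q^ℤ`.  Hence `τ` restricts to an
isomorphism `ker 𝒩 ≅ E(K)`. -/
theorem stmt12 (K : Type*) [Field K] [CharZero K]
    (L : IntermediateField K (AlgebraicClosure K)) [FiniteDimensional K L]
    (hL : Module.finrank K L = 2)
    (ψ : (AlgebraicClosure K ≃ₐ[K] AlgebraicClosure K) →* ℤˣ)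
    (hψ : ∀ σ : AlgebraicClosure K ≃ₐ[K] AlgebraicClosure K,
      ψ σ = 1 ↔ ∀ y ∈ L, σ y = y)
    (E : Type*) [CommGroup E]
    [MulDistribMulAction (AlgebraicClosure K ≃ₐ[K] AlgebraicClosure K) E]
    (q : Kˣ)
    (τ : (AlgebraicClosure K)ˣ ⧸ Subgroup.zpowers
        (Units.map (algebraMap K (AlgebraicClosure K)).toMonoidHom q) ≃* E)
    (hτ : ∀ (σ : AlgebraicClosure K ≃ₐ[K] AlgebraicClosure K)
        (u : (AlgebraicClosure K)ˣ),
      τ (QuotientGroup.mk (Units.map (MonoidHomClass.toMonoidHom σ) u))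
        = (σ • τ (QuotientGroup.mk u)) ^ (ψ σ : ℤ)) :
    ∀ (u : (AlgebraicClosure K)ˣ) (hu : (u : AlgebraicClosure K) ∈ L),
      (∀ σ : AlgebraicClosure K ≃ₐ[K] AlgebraicClosure K,
        σ • τ (QuotientGroup.mk u) = τ (QuotientGroup.mk u))
      ↔ ∃ m : ℤ,
          algebraMap K (AlgebraicClosure K)
            (Algebra.norm K (⟨(u : AlgebraicClosure K), hu⟩ : L))
          = algebraMap K (AlgebraicClosure K) (q : K) ^ m := by
  classical
  intro u hu
  set Kb := AlgebraicClosure K with hKb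
  have hcard : Fintype.card (L →ₐ[K] Kb) = 2 := by rw [AlgHom.card]; exact hL
  -- norm formula
  have normfact : ∀ (σ : Kb ≃ₐ[K] Kb), (∃ y ∈ L, σ y ≠ y) →
      algebraMap K Kb (Algebra.norm K (⟨(u : Kb), hu⟩ : L))
        = σ (u : Kb) * (u : Kb) := by
    rintro σ ⟨y, hyL, hy⟩
    have hφ : (σ.toAlgHom.comp L.val) ≠ L.val := by
      intro h
      exact hy (congrArg (fun f => f ⟨y, hyL⟩) h)
    rw [Algebra.norm_eq_prod_embeddings]
    have huniv : ({σ.toAlgHom.comp L.val, L.val} : Finset (L →ₐ[K] Kb))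
        = Finset.univ := by
      apply Finset.eq_of_subset_of_card_le (Finset.subset_univ _)
      rw [Finset.card_univ, hcard, Finset.card_pair hφ]
    rw [← huniv, Finset.prod_pair hφ]
    rfl
  -- quotient fact
  have hq : ∀ v : Kbˣ, (QuotientGroup.mk v : Kbˣ ⧸ Subgroup.zpowers
      (Units.map (algebraMap K Kb).toMonoidHom q)) = 1
      ↔ ∃ m : ℤ, (v : Kb) = algebraMap K Kb (q : K) ^ m := by
    intro v
    rw [QuotientGroup.eq_one_iff, Subgroup.mem_zpowers_iff]
    constructor
    · rintro ⟨m, rfl⟩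
      exact ⟨m, by rw [Units.val_zpow_eq_zpow_val]; rfl⟩
    · rintro ⟨m, h⟩
      refine ⟨m, Units.ext ?_⟩
      rw [Units.val_zpow_eq_zpow_val]
      exact h.symm
  -- ψ value on non-fixing automorphisms
  have hpsi : ∀ σ : Kb ≃ₐ[K] Kb, (∃ y ∈ L, σ y ≠ y) → ((ψ σ : ℤˣ) : ℤ) = -1 := by
    rintro σ ⟨y, hyL, hy⟩
    rcases Int.units_eq_one_or (ψ σ) with h | h
    · exact absurd ((hψ σ).1 h y hyL) hy
    · rw [h]; rfl
  constructor
  · -- τ(u) fixed → norm in q^ℤ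
    intro hfix
    -- construct a nontrivial automorphism
    obtain ⟨φ, hφ⟩ : ∃ φ : L →ₐ[K] Kb, φ ≠ L.val := by
      classical
      exact Fintype.exists_ne_of_one_lt_card (by rw [hcard]; norm_num) L.val
    obtain ⟨y0, hy0⟩ : ∃ y : L, φ y ≠ (y : Kb) := by
      by_contra h
      push_neg at h
      exact hφ (AlgHom.ext fun y => h y)
    let σ0A : Kb →ₐ[K] Kb := AlgHom.liftNormal φ Kb
    let σ0 : Kb ≃ₐ[K] Kb := AlgEquiv.ofBijective σ0A (AlgHom.normal_bijective K Kb Kb σ0A)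
    have hσ0 : ∀ y : L, σ0 (y : Kb) = φ y := by
      intro y
      have := AlgHom.liftNormal_commutes φ Kb y
      exact this
    have hσ0n : ∃ y ∈ L, σ0 y ≠ y := by
      refine ⟨(y0 : Kb), y0.2, ?_⟩
      rw [hσ0 y0]
      exact hy0
    have key := hτ σ0 u
    rw [hpsi σ0 hσ0n, hfix σ0] at key
    have hmul : τ ((QuotientGroup.mk (Units.map (MonoidHomClass.toMonoidHom σ0) u) :
        Kbˣ ⧸ _) * QuotientGroup.mk u) = 1 := by
      rw [map_mul, key, zpow_neg_one, inv_mul_cancel]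
    have hone : (QuotientGroup.mk (Units.map (MonoidHomClass.toMonoidHom σ0) u * u) :
        Kbˣ ⧸ Subgroup.zpowers (Units.map (algebraMap K Kb).toMonoidHom q)) = 1 := by
      have := τ.injective (by rw [hmul, map_one] : τ _ = τ 1)
      rw [QuotientGroup.mk_mul]
      exact hmul.trans (map_one τ).symm |> τ.injective
    obtain ⟨m, hm⟩ := (hq _).1 hone
    refine ⟨m, ?_⟩
    rw [normfact σ0 hσ0n]
    simpa using hm
  · -- norm in q^ℤ → τ(u) fixed
    rintro ⟨m, hm⟩ σ
    rcases Int.units_eq_one_or (ψ σ) with h1 | h1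
    · have hfixL := (hψ σ).1 h1
      have huσ : Units.map (MonoidHomClass.toMonoidHom σ) u = u :=
        Units.ext (hfixL (u : Kb) hu)
      have key := hτ σ u
      rw [h1, huσ] at key
      simpa using key.symm
    · have hne : ∃ y ∈ L, σ y ≠ y := by
        by_contra h
        push_neg at h
        rw [(hψ σ).2 h] at h1
        exact absurd h1 (by decide)
      have hn := normfact σ hne
      rw [hm] at hn
      have hone : (QuotientGroup.mk (Units.map (MonoidHomClass.toMonoidHom σ) u * u) :
          Kbˣ ⧸ Subgroup.zpowers (Units.map (algebraMap K Kb).toMonoidHom q)) = 1 :=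
        (hq _).2 ⟨m, by simpa using hn.symm⟩
      have h2 : (QuotientGroup.mk (Units.map (MonoidHomClass.toMonoidHom σ) u) :
          Kbˣ ⧸ Subgroup.zpowers (Units.map (algebraMap K Kb).toMonoidHom q))
          = (QuotientGroup.mk u)⁻¹ := by
        rw [eq_inv_iff_mul_eq_one, ← QuotientGroup.mk_mul]
        exact hone
      have key := hτ σ u
      rw [h1, h2, map_inv] at key
      have key' : (τ (QuotientGroup.mk u))⁻¹ = (σ • τ (QuotientGroup.mk u))⁻¹ := by
        simpa using key
      exact (inv_injective key').symm
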